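/- Let d, w, U ≥ 1, γ ∈ (0,1) and β ∈ (0,1) satisfy γ·w ≥ 2 and 2^d ≥ 2/β, let σ > 0 and set E = √2·σ·√(log(4·d·w/β)). Let f : Fin U → ℕ be a frequency function with total count N = Σ_y f(y) ≥ 1 and fix x ∈ Fin U. Let (H_r(y))_{r ∈ Fin d, y ∈ Fin U} be i.i.d. uniform on Fin w and (η[r,c])_{r ∈ Fin d, c ∈ Fin w} be i.i.d. N(0, σ²), mutually independent, and define the private Count-Min estimate f̂(x) = min_{r ∈ Fin d} ( Σ_{y : H_r(y) = H_r(x)} f(y) + E + η[r, H_r(x)] ). Then with probability at least 1 − β, we have f(x) ≤ f̂(x) ≤ f(x) + γ·N + 2E. -/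

import Mathlib

set_option maxHeartbeats 1000000


open MeasureTheory ProbabilityTheory Real
open scoped ENNReal NNReal

/-- Codomain of the combined family: hash values live in `Fin w`, noise values in `ℝ`. -/
def Codom (ι κ : Type) (w : ℕ) : ι ⊕ κ → Type
  | .inl _ => Fin w
  | .inr _ => ℝ

instance {ι κ : Type} {w : ℕ} (i : ι ⊕ κ) : MeasurableSpace (Codom ι κ w i) :=
  match i with
  | .inl _ => inferInstanceAs (MeasurableSpace (Fin w))
  | .inr _ => inferInstanceAs (MeasurableSpace ℝ)

/-- The combined family of the hash variables and the Gaussian noise variables. -/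
def Vars {Ω : Type*} {ι κ : Type} {w : ℕ} (H : ι → Ω → Fin w) (η : κ → Ω → ℝ) :
    ∀ i : ι ⊕ κ, Ω → Codom ι κ w i
  | .inl p => H p
  | .inr q => η q

instance {ι κ : Type} {w : ℕ} (p : ι) :
    MeasurableSingletonClass (Codom ι κ w (.inl p)) :=
  inferInstanceAs (MeasurableSingletonClass (Fin w))

instance {ι κ : Type} {w : ℕ} (p : ι) : Countable (Codom ι κ w (.inl p)) :=
  inferInstanceAs (Countable (Fin w))

instance {ι κ : Type} {w : ℕ} (p : ι) : DecidableEq (Codom ι κ w (.inl p)) :=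
  inferInstanceAs (DecidableEq (Fin w))

lemma measEqSet {α : Type*} [MeasurableSpace α] {β : Type*} [MeasurableSpace β]
    [MeasurableSingletonClass β] [Countable β] {f g : α → β}
    (hf : Measurable f) (hg : Measurable g) : MeasurableSet {a | f a = g a} := by
  have h : {a | f a = g a} = ⋃ c, f ⁻¹' {c} ∩ g ⁻¹' {c} := by
    ext a
    simp only [Set.mem_setOf_eq, Set.mem_iUnion, Set.mem_inter_iff, Set.mem_preimage,
      Set.mem_singleton_iff]
    exact ⟨fun h => ⟨g a, h, rfl⟩, fun ⟨c, h1, h2⟩ => h1.trans h2.symm⟩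
  rw [h]
  exact MeasurableSet.iUnion fun c =>
    (hf (measurableSet_singleton c)).inter (hg (measurableSet_singleton c))

lemma gauss_tail_aux (v : ℝ≥0) (hv : v ≠ 0) (t : ℝ) (ht : Real.sqrt v ≤ t) :
    gaussianReal 0 v {x | t ≤ x} ≤ ENNReal.ofReal (Real.exp (-t ^ 2 / (2 * v))) := by
  have hv0 : (0:ℝ) < v := by positivity
  have hsv : 0 < Real.sqrt v := Real.sqrt_pos.mpr hv0
  have ht0 : 0 < t := lt_of_lt_of_le hsv ht
  set b : ℝ := (2 * v)⁻¹ with hb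
  have hb0 : 0 < b := by positivity
  set c : ℝ := (Real.sqrt (2 * Real.pi * v))⁻¹ * t⁻¹ with hc
  have hc0 : 0 ≤ c := by positivity
  have hFTC : ∫ x in Set.Ioi t, x * Real.exp (-b * x ^ 2)
      = (2*b)⁻¹ * Real.exp (-b * t^2) := by
    have hderiv : ∀ x ∈ Set.Ici t, HasDerivAt (fun x => -(2*b)⁻¹ * Real.exp (-b * x ^ 2))
        (x * Real.exp (-b * x^2)) x := by
      intro x _
      have h1 : HasDerivAt (fun x : ℝ => -b * x ^ 2) (-b * (2 * x)) x := by
        simpa using (hasDerivAt_pow 2 x).const_mul (-b)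
      have h2 := (h1.exp).const_mul (-(2*b)⁻¹)
      have h3 : x * Real.exp (-b * x^2) = -(2*b)⁻¹ * (Real.exp (-b * x ^ 2) * (-b * (2 * x))) := by
        field_simp
      rw [h3]; exact h2
    have hint : IntegrableOn (fun x => x * Real.exp (-b * x ^ 2)) (Set.Ioi t) :=
      (integrable_mul_exp_neg_mul_sq hb0).integrableOn
    have htends : Filter.Tendsto (fun x => -(2*b)⁻¹ * Real.exp (-b * x ^ 2))
        Filter.atTop (nhds 0) := by
      have h3 : Filter.Tendsto (fun x : ℝ => -b * x ^ 2) Filter.atTop Filter.atBot := by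
        have h4 : Filter.Tendsto (fun x : ℝ => b * x ^ 2) Filter.atTop Filter.atTop :=
          (Filter.tendsto_pow_atTop (two_ne_zero)).const_mul_atTop hb0
        simpa [neg_mul] using h4
      have := (Real.tendsto_exp_atBot.comp h3).const_mul (-(2*b)⁻¹)
      simpa using this
    have := integral_Ioi_of_hasDerivAt_of_tendsto' hderiv hint htends
    rw [this]; ring
  have key : ∫ x in {x : ℝ | t ≤ x}, gaussianPDFReal 0 v x ≤ Real.exp (-t^2/(2*v)) := by
    have hIci : {x : ℝ | t ≤ x} = Set.Ici t := rfl
    rw [hIci, integral_Ici_eq_integral_Ioi]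
    have hmono : ∫ x in Set.Ioi t, gaussianPDFReal 0 v x
        ≤ ∫ x in Set.Ioi t, c * (x * Real.exp (-b*x^2)) := by
      refine setIntegral_mono_on ((integrable_gaussianPDFReal 0 v).integrableOn)
        (((integrable_mul_exp_neg_mul_sq hb0).const_mul c).integrableOn) measurableSet_Ioi ?_
      intro x hx
      have hx' : t < x := hx
      rw [gaussianPDFReal]
      have hexp : -(x - 0)^2/(2*(v:ℝ)) = -b * x^2 := by
        rw [hb]; field_simp; ring
      rw [hexp, hc]
      have hex : 0 < Real.exp (-b*x^2) := Real.exp_pos _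
      have h1x : 1 ≤ t⁻¹ * x := by
        rw [← div_eq_inv_mul]
        exact (one_le_div ht0).mpr hx'.le
      have hs0 : 0 ≤ (Real.sqrt (2 * Real.pi * v))⁻¹ := by positivity
      nlinarith [mul_le_mul_of_nonneg_left h1x (mul_nonneg hs0 hex.le)]
    refine hmono.trans ?_
    rw [MeasureTheory.integral_const_mul, hFTC]
    have h2b : (2*b)⁻¹ = (v:ℝ) := by rw [hb]; field_simp
    have hexp2 : -b * t^2 = -t^2/(2*(v:ℝ)) := by rw [hb]; field_simp
    rw [h2b, hexp2]
    have hcv : c * (v:ℝ) ≤ 1 := by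
      have h1 : t⁻¹ ≤ (Real.sqrt v)⁻¹ := by
        apply inv_anti₀ hsv ht
      have h2 : Real.sqrt (2 * Real.pi * v) = Real.sqrt (2*Real.pi) * Real.sqrt v := by
        rw [Real.sqrt_mul (by positivity)]
      have h3 : 1 ≤ Real.sqrt (2*Real.pi) := by
        rw [show (1:ℝ) = Real.sqrt 1 by simp]
        exact Real.sqrt_le_sqrt (by nlinarith [Real.pi_gt_three])
      have h4 : (Real.sqrt (2*Real.pi*v))⁻¹ ≤ (Real.sqrt v)⁻¹ := by
        rw [h2]
        apply inv_anti₀ hsv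
        nlinarith [Real.sqrt_nonneg (v:ℝ)]
      have h5 : Real.sqrt v * Real.sqrt v = (v:ℝ) := Real.mul_self_sqrt v.2
      rw [hc]
      have hsvi : 0 ≤ (Real.sqrt (v:ℝ))⁻¹ := by positivity
      have hti : 0 ≤ t⁻¹ := by positivity
      calc (Real.sqrt (2*Real.pi*(v:ℝ)))⁻¹ * t⁻¹ * (v:ℝ)
          ≤ (Real.sqrt v)⁻¹ * (Real.sqrt v)⁻¹ * (v:ℝ) := by
            apply mul_le_mul_of_nonneg_right _ hv0.le
            exact mul_le_mul h4 h1 hti hsvi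
        _ = 1 := by
            field_simp
            rw [Real.sq_sqrt hv0.le]
    calc c * ((v:ℝ) * Real.exp (-t^2/(2*(v:ℝ))))
        = (c * (v:ℝ)) * Real.exp (-t^2/(2*(v:ℝ))) := by ring
      _ ≤ 1 * Real.exp (-t^2/(2*(v:ℝ))) :=
          mul_le_mul_of_nonneg_right hcv (Real.exp_pos _).le
      _ = _ := by rw [one_mul]
  rw [gaussianReal_apply_eq_integral 0 hv]
  exact ENNReal.ofReal_le_ofReal key

lemma gauss_tail_neg_aux (v : ℝ≥0) (hv : v ≠ 0) (t : ℝ) (ht : Real.sqrt v ≤ t) :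
    gaussianReal 0 v {x | x ≤ -t} ≤ ENNReal.ofReal (Real.exp (-t ^ 2 / (2 * v))) := by
  have hmap := gaussianReal_map_const_mul (μ := 0) (v := v) (-1)
  have h1 : NNReal.mk ((-1:ℝ)^2) (sq_nonneg _) = 1 := by ext; norm_num
  rw [h1, one_mul, mul_zero] at hmap
  have hpre : {x : ℝ | x ≤ -t} = (fun x : ℝ => -1 * x) ⁻¹' {x | t ≤ x} := by
    ext y
    simp only [Set.mem_setOf_eq, Set.mem_preimage, neg_one_mul]
    constructor <;> intro h <;> linarith
  have hms : MeasurableSet {x : ℝ | t ≤ x} := measurableSet_Ici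
  rw [hpre, ← Measure.map_apply (by fun_prop) hms, hmap]
  exact gauss_tail_aux v hv t ht

/-- Point-wise utility of the private Count-Min sketch: with `d` rows,
`w` columns, `γ·w ≥ 2`, `2^d ≥ 2/β`, fully random i.i.d. hashes, and i.i.d. `N(0,σ²)` noises
independent of the hashes, the private estimate
`f̂(x) = min_r (counter + E + noise)` with `E = √2·σ·√(log(4dw/β))` satisfies, with
probability at least `1 - β`, `f(x) ≤ f̂(x) ≤ f(x) + γ·N + 2E`. -/
theorem stmt16 {Ω : Type*} [MeasurableSpace Ω] (P : Measure Ω) [IsProbabilityMeasure P]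
    (d w U : ℕ) (hd : 1 ≤ d) (hw : 1 ≤ w) (hU : 1 ≤ U)
    (γ β : ℝ) (hγ : γ ∈ Set.Ioo (0 : ℝ) 1) (hβ : β ∈ Set.Ioo (0 : ℝ) 1)
    (hγw : 2 ≤ γ * w) (hdβ : 2 / β ≤ 2 ^ d)
    (σ : ℝ) (hσ : 0 < σ)
    (E : ℝ) (hE : E = Real.sqrt 2 * σ * Real.sqrt (Real.log (4 * d * w / β)))
    (f : Fin U → ℕ) (N : ℕ) (hN : N = ∑ y : Fin U, f y) (hN1 : 1 ≤ N)
    (x : Fin U)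
    (H : Fin d × Fin U → Ω → Fin w)
    (η : Fin d × Fin w → Ω → ℝ)
    (hmeas : ∀ i, Measurable (Vars H η i))
    (hindep : iIndepFun (Vars H η) P)
    (hdistH : ∀ p, Measure.map (H p) P = (w : ℝ≥0∞)⁻¹ • Measure.count)
    (hdistη : ∀ q, Measure.map (η q) P = gaussianReal 0 ⟨σ ^ 2, sq_nonneg σ⟩)
    (fhat : Ω → ℝ)
    (hfh : ∀ ω, fhat ω = ⨅ r : Fin d,
      ((∑ y ∈ Finset.univ.filter (fun y => H (r, y) ω = H (r, x) ω), (f y : ℝ))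
        + E + η (r, H (r, x) ω) ω)) :
    ENNReal.ofReal (1 - β) ≤
      P {ω | (f x : ℝ) ≤ fhat ω ∧ fhat ω ≤ (f x : ℝ) + γ * N + 2 * E} := by
  classical
  obtain ⟨hγ0, hγ1⟩ := hγ
  obtain ⟨hβ0, hβ1⟩ := hβ
  have hw0 : (0:ℝ) < w := by exact_mod_cast hw
  have hw1 : (1:ℝ) ≤ w := by exact_mod_cast hw
  have hd1 : (1:ℝ) ≤ d := by exact_mod_cast hd
  have hd0 : (0:ℝ) < d := by exact_mod_cast hd
  have hN0 : (0:ℝ) < N := by exact_mod_cast hN1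
  have hHm : ∀ p, Measurable (H p) := fun p => hmeas (Sum.inl p)
  have hηm : ∀ q, Measurable (η q) := fun q => hmeas (Sum.inr q)
  set v : ℝ≥0 := ⟨σ ^ 2, sq_nonneg σ⟩ with hv
  have hvR : (v : ℝ) = σ ^ 2 := rfl
  have hvne : v ≠ 0 := by
    rw [← NNReal.coe_ne_zero, hvR]
    positivity
  -- basic facts about E
  have hz : (0:ℝ) < 4 * d * w / β := by positivity
  have hL : 1 ≤ Real.log (4 * d * w / β) := by
    rw [Real.le_log_iff_exp_le hz]
    have h4 : (4:ℝ) ≤ 4 * d * w / β := by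
      rw [le_div_iff₀ hβ0]
      nlinarith [mul_le_mul hd1 hw1 zero_le_one (by linarith : (0:ℝ) ≤ (d:ℝ))]
    nlinarith [Real.exp_one_lt_d9]
  have hL0 : (0:ℝ) ≤ Real.log (4 * d * w / β) := by linarith
  have hsqv : Real.sqrt v = σ := by rw [hvR]; exact Real.sqrt_sq hσ.le
  have hsq2 : 1 ≤ Real.sqrt 2 := by
    rw [show (1:ℝ) = Real.sqrt 1 by simp]
    exact Real.sqrt_le_sqrt one_le_two
  have hsqL : 1 ≤ Real.sqrt (Real.log (4 * d * w / β)) := by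
    rw [show (1:ℝ) = Real.sqrt 1 by simp]
    exact Real.sqrt_le_sqrt hL
  have hEσ : Real.sqrt v ≤ E := by
    rw [hsqv, hE]
    have h12 : 1 ≤ Real.sqrt 2 * Real.sqrt (Real.log (4 * d * w / β)) := by nlinarith
    nlinarith [mul_le_mul_of_nonneg_right h12 hσ.le]
  have hE0 : 0 ≤ E := le_trans (Real.sqrt_nonneg _) hEσ
  have hexpE : Real.exp (-E ^ 2 / (2 * v)) = β / (4 * d * w) := by
    have hE2 : E ^ 2 = 2 * σ ^ 2 * Real.log (4 * d * w / β) := by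
      rw [hE, mul_pow, mul_pow, Real.sq_sqrt (by norm_num : (0:ℝ) ≤ 2), Real.sq_sqrt hL0]
    have h1 : -E ^ 2 / (2 * (v:ℝ)) = -Real.log (4 * d * w / β) := by
      rw [hE2, hvR, div_eq_iff (by positivity)]
      ring
    rw [h1, Real.exp_neg, Real.exp_log hz, inv_div]
  -- the noise bad event
  set NB : Set Ω := ⋃ q : Fin d × Fin w, {ω | E < |η q ω|} with hNB
  -- row excess functions
  set g : Fin d → Ω → ℝ≥0∞ := fun r ω => ∑ y ∈ Finset.univ.erase x,
    if H (r, y) ω = H (r, x) ω then (f y : ℝ≥0∞) else 0 with hg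
  set A : Fin d → Set Ω := fun r => {ω | ENNReal.ofReal (γ * N) ≤ g r ω} with hA
  set RB : Set Ω := ⋂ r : Fin d, A r with hRB
  -- measurability of equality sets
  have hmeasEq : ∀ p p' : Fin d × Fin U, MeasurableSet {ω | H p ω = H p' ω} :=
    fun p p' => measEqSet (hHm p) (hHm p')
  -- single hash distribution
  have hsingle : ∀ (p : Fin d × Fin U) (c : Fin w), P (H p ⁻¹' {c}) = (w : ℝ≥0∞)⁻¹ := by
    intro p c
    rw [← Measure.map_apply (hHm p) (measurableSet_singleton c), hdistH p]
    simp [Measure.count_singleton]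
  -- collision probability
  have hwen0 : (w : ℝ≥0∞) ≠ 0 := Nat.cast_ne_zero.mpr (by omega)
  have hcol : ∀ p p' : Fin d × Fin U, p ≠ p' → P {ω | H p ω = H p' ω} = (w : ℝ≥0∞)⁻¹ := by
    intro p p' hpp'
    have hiu : {ω | H p ω = H p' ω} = ⋃ c : Fin w, (H p ⁻¹' {c} ∩ H p' ⁻¹' {c}) := by
      ext ω
      simp only [Set.mem_setOf_eq, Set.mem_iUnion, Set.mem_inter_iff, Set.mem_preimage,
        Set.mem_singleton_iff]
      exact ⟨fun h => ⟨H p' ω, h, rfl⟩, fun ⟨c, h1, h2⟩ => h1.trans h2.symm⟩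
    have hdisj : Pairwise (Function.onFun Disjoint
        fun c : Fin w => H p ⁻¹' {c} ∩ H p' ⁻¹' {c}) := by
      intro c c' hcc'
      rw [Function.onFun, Set.disjoint_left]
      rintro ω ⟨h1, _⟩ ⟨h3, _⟩
      exact hcc' ((Set.mem_singleton_iff.mp h1).symm.trans (Set.mem_singleton_iff.mp h3))
    have hind : IndepFun (H p) (H p') P :=
      hindep.indepFun (show (Sum.inl p : Fin d × Fin U ⊕ Fin d × Fin w) ≠ Sum.inl p' by
        simpa using hpp')
    rw [hiu, measure_iUnion hdisj (fun c =>
      ((hHm p) (measurableSet_singleton c)).inter ((hHm p') (measurableSet_singleton c)))]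
    have heach : ∀ c : Fin w, P (H p ⁻¹' {c} ∩ H p' ⁻¹' {c}) = (w : ℝ≥0∞)⁻¹ * (w : ℝ≥0∞)⁻¹ := by
      intro c
      rw [hind.measure_inter_preimage_eq_mul _ _ (measurableSet_singleton c)
        (measurableSet_singleton c), hsingle p c, hsingle p' c]
    rw [tsum_fintype]
    simp_rw [heach]
    rw [Finset.sum_const, Finset.card_univ, Fintype.card_fin, nsmul_eq_mul, ← mul_assoc,
      ENNReal.mul_inv_cancel hwen0 (ENNReal.natCast_ne_top w), one_mul]
  -- expectation of excess
  have hgm : ∀ r, Measurable (g r) := by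
    intro r
    apply Finset.measurable_sum
    intro y _
    exact Measurable.ite (hmeasEq (r, y) (r, x)) measurable_const measurable_const
  have hlint : ∀ r, ∫⁻ ω, g r ω ∂P ≤ (N : ℝ≥0∞) * (w : ℝ≥0∞)⁻¹ := by
    intro r
    have hsum : ∫⁻ ω, g r ω ∂P = ∑ y ∈ Finset.univ.erase x,
        ∫⁻ ω, (if H (r, y) ω = H (r, x) ω then (f y : ℝ≥0∞) else 0) ∂P := by
      rw [hg]
      exact lintegral_finset_sum _ (fun y _ =>
        Measurable.ite (hmeasEq (r, y) (r, x)) measurable_const measurable_const)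
    have heach : ∀ y ∈ Finset.univ.erase x,
        ∫⁻ ω, (if H (r, y) ω = H (r, x) ω then (f y : ℝ≥0∞) else 0) ∂P
          = (f y : ℝ≥0∞) * (w : ℝ≥0∞)⁻¹ := by
      intro y hy
      have hiy : (fun ω => if H (r, y) ω = H (r, x) ω then (f y : ℝ≥0∞) else 0)
          = Set.indicator {ω | H (r, y) ω = H (r, x) ω} (fun _ => (f y : ℝ≥0∞)) := by
        ext ω
        rw [Set.indicator_apply]
        rfl
      rw [hiy, lintegral_indicator (hmeasEq (r, y) (r, x)), setLIntegral_const,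
        hcol (r, y) (r, x) (by simp [Finset.mem_erase] at hy; simp [Prod.ext_iff, hy])]
    rw [hsum, Finset.sum_congr rfl heach, ← Finset.sum_mul]
    apply mul_le_mul_left
    have h1 : (∑ y ∈ Finset.univ.erase x, (f y : ℝ≥0∞)) = ((∑ y ∈ Finset.univ.erase x, f y : ℕ) : ℝ≥0∞) := by
      push_cast
      rfl
    rw [h1, hN]
    exact_mod_cast Nat.cast_le.mpr (Finset.sum_le_sum_of_subset (Finset.erase_subset x Finset.univ))
  -- Markov
  have hAr : ∀ r, P (A r) ≤ ENNReal.ofReal (1/2) := by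
    intro r
    have hc0 : ENNReal.ofReal (γ * N) ≠ 0 := by
      rw [ne_eq, ENNReal.ofReal_eq_zero, not_le]
      positivity
    have hmk : P (A r) ≤ (∫⁻ ω, g r ω ∂P) / ENNReal.ofReal (γ * N) := by
      rw [hA]
      exact meas_ge_le_lintegral_div (hgm r).aemeasurable hc0 ENNReal.ofReal_ne_top
    refine hmk.trans ?_
    refine (ENNReal.div_le_div_right (hlint r) _).trans ?_
    have hrw : (N : ℝ≥0∞) * (w : ℝ≥0∞)⁻¹ / ENNReal.ofReal (γ * N)
        = ENNReal.ofReal ((N / w) / (γ * N)) := by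
      rw [ENNReal.ofReal_div_of_pos (by positivity), ENNReal.ofReal_div_of_pos (by positivity),
        ENNReal.ofReal_natCast, ENNReal.ofReal_natCast]
      simp [div_eq_mul_inv]
    rw [hrw]
    apply ENNReal.ofReal_le_ofReal
    rw [div_le_div_iff₀ (by positivity) (by norm_num)]
    have h2 : (N:ℝ) / w * 2 ≤ γ * N := by
      rw [div_mul_eq_mul_div, div_le_iff₀ hw0]
      nlinarith [mul_le_mul_of_nonneg_left hγw hN0.le]
    linarith
  -- independence product over rows
  have hprod : ∀ s : Finset (Fin d), P (⋂ r ∈ s, A r) = ∏ r ∈ s, P (A r) := by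
    intro s
    induction s using Finset.induction_on with
    | empty => simp
    | @insert r0 s hr0s ih =>
      set S0 : Finset (Fin d × Fin U ⊕ Fin d × Fin w) :=
        ({r0} ×ˢ (Finset.univ : Finset (Fin U))).image Sum.inl with hS0
      set T0 : Finset (Fin d × Fin U ⊕ Fin d × Fin w) :=
        (s ×ˢ (Finset.univ : Finset (Fin U))).image Sum.inl with hT0
      have hST : Disjoint S0 T0 := by
        rw [hS0, hT0, Finset.disjoint_left]
        rintro a ha hb
        simp only [Finset.mem_image, Finset.mem_product, Finset.mem_singleton] at ha hb
        obtain ⟨⟨r1, y1⟩, ⟨hr1, -⟩, rfl⟩ := ha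
        obtain ⟨⟨r2, y2⟩, ⟨hr2, -⟩, heq⟩ := hb
        rw [Sum.inl.injEq, Prod.mk.injEq] at heq
        apply hr0s
        rwa [heq.1, hr1] at hr2
      have hmS : ∀ y : Fin U, (Sum.inl (r0, y) : Fin d × Fin U ⊕ Fin d × Fin w) ∈ S0 :=
        fun y => Finset.mem_image_of_mem _
          (Finset.mem_product.mpr ⟨Finset.mem_singleton_self r0, Finset.mem_univ y⟩)
      have hmT : ∀ rr : {r : Fin d // r ∈ s}, ∀ y : Fin U,
          (Sum.inl (rr.1, y) : Fin d × Fin U ⊕ Fin d × Fin w) ∈ T0 :=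
        fun rr y => Finset.mem_image_of_mem _
          (Finset.mem_product.mpr ⟨rr.2, Finset.mem_univ y⟩)
      have hIndep2 := hindep.indepFun_finset S0 T0 hST hmeas
      set BS : Set (∀ i : S0, Codom (Fin d × Fin U) (Fin d × Fin w) w i) :=
        {vv | ENNReal.ofReal (γ * N) ≤ ∑ y ∈ Finset.univ.erase x,
          if vv ⟨Sum.inl (r0, y), hmS y⟩ = vv ⟨Sum.inl (r0, x), hmS x⟩
          then (f y : ℝ≥0∞) else 0} with hBS
      set BT : Set (∀ i : T0, Codom (Fin d × Fin U) (Fin d × Fin w) w i) :=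
        ⋂ rr : {r : Fin d // r ∈ s},
          {vv | ENNReal.ofReal (γ * N) ≤ ∑ y ∈ Finset.univ.erase x,
            if vv ⟨Sum.inl (rr.1, y), hmT rr y⟩ = vv ⟨Sum.inl (rr.1, x), hmT rr x⟩
            then (f y : ℝ≥0∞) else 0} with hBT
      have hBSm : MeasurableSet BS := by
        have hmf : Measurable (fun vv : (∀ i : S0, Codom (Fin d × Fin U) (Fin d × Fin w) w i) =>
            ∑ y ∈ Finset.univ.erase x,
              if vv ⟨Sum.inl (r0, y), hmS y⟩ = vv ⟨Sum.inl (r0, x), hmS x⟩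
              then (f y : ℝ≥0∞) else 0) := by
          apply Finset.measurable_sum
          intro y _
          exact Measurable.ite (measEqSet (measurable_pi_apply _) (measurable_pi_apply _))
            measurable_const measurable_const
        exact hmf measurableSet_Ici
      have hBTm : MeasurableSet BT := by
        refine MeasurableSet.iInter fun rr => ?_
        have hmf : Measurable (fun vv : (∀ i : T0, Codom (Fin d × Fin U) (Fin d × Fin w) w i) =>
            ∑ y ∈ Finset.univ.erase x,
              if vv ⟨Sum.inl (rr.1, y), hmT rr y⟩ = vv ⟨Sum.inl (rr.1, x), hmT rr x⟩
              then (f y : ℝ≥0∞) else 0) := by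
          apply Finset.measurable_sum
          intro y _
          exact Measurable.ite (measEqSet (measurable_pi_apply _) (measurable_pi_apply _))
            measurable_const measurable_const
        exact hmf measurableSet_Ici
      have hpreS : (fun a (i : S0) => Vars H η i a) ⁻¹' BS = A r0 := by
        ext ω
        simp only [hBS, hA, hg, Set.mem_preimage, Set.mem_setOf_eq]
        simp only [Vars]
        convert Iff.rfl
        exact if_congr Iff.rfl rfl rfl
      have hpreT : (fun a (i : T0) => Vars H η i a) ⁻¹' BT = ⋂ r ∈ s, A r := by
        rw [hBT, Set.preimage_iInter]
        ext ω
        simp only [hA, hg, Set.mem_iInter, Set.mem_preimage, Set.mem_setOf_eq, Subtype.forall]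
        simp only [Vars]
        convert Iff.rfl
        exact if_congr Iff.rfl rfl rfl
      have hmul := hIndep2.measure_inter_preimage_eq_mul _ _ hBSm hBTm
      rw [Finset.set_biInter_insert, Finset.prod_insert hr0s, ← ih, ← hpreS, ← hpreT, hmul]
  -- row bad event bound
  have hRBb : P RB ≤ ENNReal.ofReal (β / 2) := by
    have h1 : RB = ⋂ r ∈ (Finset.univ : Finset (Fin d)), A r := by
      rw [hRB]
      simp
    rw [h1, hprod]
    calc ∏ r : Fin d, P (A r) ≤ ∏ _r : Fin d, ENNReal.ofReal (1/2) :=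
          Finset.prod_le_prod' fun r _ => hAr r
      _ = ENNReal.ofReal (1/2) ^ d := by
          rw [Finset.prod_const, Finset.card_univ, Fintype.card_fin]
      _ = ENNReal.ofReal ((1/2) ^ d) := by rw [ENNReal.ofReal_pow (by norm_num)]
      _ ≤ ENNReal.ofReal (β / 2) := by
          apply ENNReal.ofReal_le_ofReal
          have h2d : (0:ℝ) < 2 ^ d := by positivity
          rw [div_pow, one_pow, div_le_div_iff₀ h2d two_pos]
          nlinarith [(div_le_iff₀ hβ0).mp hdβ]
  -- noise bad event bound
  have hNBb : P NB ≤ ENNReal.ofReal (β / 2) := by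
    have hq : ∀ q : Fin d × Fin w, P {ω | E < |η q ω|} ≤ ENNReal.ofReal (β / (2 * d * w)) := by
      intro q
      have hsubq : {ω | E < |η q ω|} ⊆
          η q ⁻¹' Set.Ici E ∪ η q ⁻¹' Set.Iic (-E) := by
        intro ω hω
        have hω' : E < |η q ω| := hω
        rcases lt_abs.mp hω' with h | h
        · exact Or.inl h.le
        · exact Or.inr (by simp only [Set.mem_preimage, Set.mem_Iic]; linarith)
      refine (measure_mono hsubq).trans ((measure_union_le _ _).trans ?_)
      have hIci : P (η q ⁻¹' Set.Ici E) ≤ ENNReal.ofReal (β / (4 * d * w)) := by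
        rw [← Measure.map_apply (hηm q) measurableSet_Ici, hdistη q]
        have h := gauss_tail_aux v hvne E hEσ
        rw [hexpE] at h
        exact h
      have hIic : P (η q ⁻¹' Set.Iic (-E)) ≤ ENNReal.ofReal (β / (4 * d * w)) := by
        rw [← Measure.map_apply (hηm q) measurableSet_Iic, hdistη q]
        have h := gauss_tail_neg_aux v hvne E hEσ
        rw [hexpE] at h
        exact h
      refine (add_le_add hIci hIic).trans ?_
      rw [← ENNReal.ofReal_add (by positivity) (by positivity)]
      apply ENNReal.ofReal_le_ofReal
      apply le_of_eq
      field_simp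
      ring
    rw [hNB]
    refine (measure_iUnion_le _).trans ?_
    rw [tsum_fintype]
    calc ∑ q : Fin d × Fin w, P {ω | E < |η q ω|}
        ≤ ∑ _q : Fin d × Fin w, ENNReal.ofReal (β / (2 * d * w)) :=
          Finset.sum_le_sum fun q _ => hq q
      _ = ((d * w : ℕ) : ℝ≥0∞) * ENNReal.ofReal (β / (2 * d * w)) := by
          rw [Finset.sum_const, Finset.card_univ, nsmul_eq_mul]
          norm_num [Fintype.card_prod]
      _ = ENNReal.ofReal (β / 2) := by
          rw [← ENNReal.ofReal_natCast, ← ENNReal.ofReal_mul (by positivity)]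
          congr 1
          push_cast
          field_simp
  -- deterministic part
  have hsub : NBᶜ ∩ RBᶜ ⊆ {ω | (f x : ℝ) ≤ fhat ω ∧ fhat ω ≤ (f x : ℝ) + γ * N + 2 * E} := by
    haveI : Nonempty (Fin d) := ⟨⟨0, hd⟩⟩
    rintro ω ⟨hn', hr'⟩
    have hnoise : ∀ q : Fin d × Fin w, |η q ω| ≤ E := by
      intro q
      by_contra h
      exact hn' (Set.mem_iUnion.mpr ⟨q, not_le.mp h⟩)
    have hrow : ∃ r : Fin d, g r ω < ENNReal.ofReal (γ * N) := by
      by_contra h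
      push_neg at h
      exact hr' (Set.mem_iInter.mpr fun r => h r)
    obtain ⟨r0, hr0⟩ := hrow
    set Xe : Fin d → ℝ := fun r => ∑ y ∈ Finset.univ.erase x,
      if H (r, y) ω = H (r, x) ω then (f y : ℝ) else 0 with hXe
    have hXe0 : ∀ r, 0 ≤ Xe r := by
      intro r
      apply Finset.sum_nonneg
      intro y _
      split <;> positivity
    have hsplit : ∀ r, (∑ y ∈ Finset.univ.filter (fun y => H (r, y) ω = H (r, x) ω), (f y : ℝ))
        = (f x : ℝ) + Xe r := by
      intro r
      rw [Finset.sum_filter, ← Finset.add_sum_erase Finset.univ _ (Finset.mem_univ x),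
        if_pos rfl]
    have hge : ∀ r, g r ω = ENNReal.ofReal (Xe r) := by
      intro r
      rw [hXe, ENNReal.ofReal_sum_of_nonneg (fun y _ => by split <;> positivity)]
      apply Finset.sum_congr rfl
      intro y _
      split <;> simp
    have hlt : Xe r0 < γ * N := by
      rw [hge r0] at hr0
      exact (ENNReal.ofReal_lt_ofReal_iff (by positivity)).mp hr0
    constructor
    · rw [hfh ω]
      apply le_ciInf
      intro r
      have h1 := (abs_le.mp (hnoise (r, H (r, x) ω))).1
      rw [hsplit r]
      linarith [hXe0 r]
    · rw [hfh ω]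
      refine (ciInf_le (Set.Finite.bddBelow (Set.finite_range _)) r0).trans ?_
      have h2 := (abs_le.mp (hnoise (r0, H (r0, x) ω))).2
      rw [hsplit r0]
      linarith
  -- conclusion
  have hunion : P (NB ∪ RB) ≤ ENNReal.ofReal β := by
    refine (measure_union_le _ _).trans ?_
    refine (add_le_add hNBb hRBb).trans ?_
    rw [← ENNReal.ofReal_add (by positivity) (by positivity)]
    norm_num
  have h1 : (1 : ℝ≥0∞) ≤ P (NBᶜ ∩ RBᶜ) + ENNReal.ofReal β := by
    calc (1 : ℝ≥0∞) = P Set.univ := (measure_univ).symm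
      _ ≤ P ((NBᶜ ∩ RBᶜ) ∪ (NB ∪ RB)) := by
          apply measure_mono
          intro ω _
          by_cases h : ω ∈ NB ∪ RB
          · exact Or.inr h
          · rw [Set.mem_union] at h
            push_neg at h
            exact Or.inl ⟨h.1, h.2⟩
      _ ≤ P (NBᶜ ∩ RBᶜ) + P (NB ∪ RB) := measure_union_le _ _
      _ ≤ _ := by exact add_le_add le_rfl hunion
  calc ENNReal.ofReal (1 - β) = 1 - ENNReal.ofReal β := by
        rw [ENNReal.ofReal_sub _ hβ0.le, ENNReal.ofReal_one]
    _ ≤ P (NBᶜ ∩ RBᶜ) := by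
        rw [tsub_le_iff_right]
        exact h1
    _ ≤ _ := measure_mono hsub
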